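/- Let σ_k be a permutation of Q items and φ ∈ [0,1). Let β_{(i,j)} denote the probability under the Mallows distribution with reference σ_k and dispersion φ that item i is ranked before item j. If σ_k(i) > σ_k(j) (item j is preferred to item i in the reference) and L = σ_k(i) - σ_k(j) + 1, then β_{(i,j)} ≤ L·φ^{L-1}/(1 + L·φ^{L-1}). -/

import Mathlib

/-- Kendall's tau distance between two permutations of `Fin Q`. -/
def kendall {Q : ℕ} (σ τ : Equiv.Perm (Fin Q)) : ℕ :=
  ((Finset.univ : Finset (Fin Q × Fin Q)).filter
    (fun p => p.1 < p.2 ∧ ¬ ((σ p.1 < σ p.2) ↔ (τ p.1 < τ p.2)))).card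

/-- The Mallows probability of the permutation `σ`, with reference ranking
`σk` and dispersion `φ`: proportional to `φ ^ d(σ, σk)` with `d` the
Kendall tau distance. -/
noncomputable def mallowsProb {Q : ℕ} (σk : Equiv.Perm (Fin Q)) (φ : ℝ)
    (σ : Equiv.Perm (Fin Q)) : ℝ :=
  φ ^ kendall σ σk / ∑ τ : Equiv.Perm (Fin Q), φ ^ kendall τ σk

/-- `mallowsBeta σk φ i j` : probability that item `i` is ranked before item
`j` under the Mallows distribution with reference `σk` and dispersion `φ`. -/
noncomputable def mallowsBeta {Q : ℕ} (σk : Equiv.Perm (Fin Q)) (φ : ℝ)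
    (i j : Fin Q) : ℝ :=
  ∑ σ : Equiv.Perm (Fin Q), if σ i < σ j then mallowsProb σk φ σ else 0

set_option linter.unusedVariables false
set_option linter.unreachableTactic false
set_option linter.unusedTactic false

open Finset Equiv


/-- The permutation of `Fin n` moving `p` up to `q` (for `p ≤ q`), shifting
the elements in `(p, q]` down by one, and fixing everything else. -/
def mvUp {n : ℕ} (p q : Fin n) (hpq : p ≤ q) : Equiv.Perm (Fin n) where
  toFun x := ⟨if x.val = p.val then q.val else
      if p.val < x.val ∧ x.val ≤ q.val then x.val - 1 else x.val, by
    have := x.isLt; have := q.isLt; split_ifs <;> omega⟩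
  invFun y := ⟨if y.val = q.val then p.val else
      if p.val ≤ y.val ∧ y.val < q.val then y.val + 1 else y.val, by
    have := y.isLt; have := p.isLt; have := q.isLt; split_ifs <;> omega⟩
  left_inv x := by
    have := x.isLt
    have hq : (p:ℕ) ≤ q := hpq
    apply Fin.ext
    simp only
    split_ifs <;> omega
  right_inv y := by
    have := y.isLt
    have hq : (p:ℕ) ≤ q := hpq
    apply Fin.ext
    simp only
    split_ifs <;> omega

lemma mvUp_val {n : ℕ} (p q : Fin n) (hpq : p ≤ q) (x : Fin n) :
    (mvUp p q hpq x : ℕ) = if x.val = p.val then q.val else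
      if p.val < x.val ∧ x.val ≤ q.val then x.val - 1 else x.val := rfl

lemma mvUp_symm_val {n : ℕ} (p q : Fin n) (hpq : p ≤ q) (y : Fin n) :
    ((mvUp p q hpq).symm y : ℕ) = if y.val = q.val then p.val else
      if p.val ≤ y.val ∧ y.val < q.val then y.val + 1 else y.val := rfl


/-- the rearranging permutation on slot indices: `sb ↦ 0`, `st ↦ n - (sb - st)`,
strictly monotone on the rest. -/
def vv {n : ℕ} (st sb : Fin n) (h : st < sb) : Equiv.Perm (Fin n) :=
  have h' : (st:ℕ) < sb := h
  have hsb := sb.isLt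
  ((mvUp ⟨0, by omega⟩ sb (by simp [Fin.le_def])).symm.trans
    (mvUp ⟨st.val + 1, by omega⟩ ⟨n - (sb.val - st.val), by omega⟩
      (by simp only [Fin.mk_le_mk]; omega)))

lemma vv_val {n : ℕ} (st sb : Fin n) (h : st < sb) (x : Fin n) : (vv st sb h x : ℕ) =
    (fun z => if z = st.val + 1 then n - (sb.val - st.val) else
      if st.val + 1 < z ∧ z ≤ n - (sb.val - st.val) then z - 1 else z)
    ((fun y => if y = sb.val then 0 else if 0 ≤ y ∧ y < sb.val then y + 1 else y) x.val) := by
  rfl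

lemma vv_apply_sb {n : ℕ} (st sb : Fin n) (h : st < sb) : (vv st sb h sb : ℕ) = 0 := by
  have hsb := sb.isLt
  have h' : (st:ℕ) < sb := h
  rw [vv_val]
  simp only
  split_ifs <;> first | omega | contradiction

lemma vv_apply_st {n : ℕ} (st sb : Fin n) (h : st < sb) :
    (vv st sb h st : ℕ) = n - (sb.val - st.val) := by
  have hsb := sb.isLt
  have h' : (st:ℕ) < sb := h
  rw [vv_val]
  simp only
  split_ifs <;> first | omega | contradiction

lemma vv_mono {n : ℕ} (st sb : Fin n) (h : st < sb) {x y : Fin n}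
    (hx1 : x ≠ st) (hx2 : x ≠ sb) (hy1 : y ≠ st) (hy2 : y ≠ sb)
    (hxy : x < y) : vv st sb h x < vv st sb h y := by
  have hsb := sb.isLt
  have hylt := y.isLt
  have h' : (st:ℕ) < sb := h
  have hx1' : (x:ℕ) ≠ st := fun hc => hx1 (Fin.ext hc)
  have hx2' : (x:ℕ) ≠ sb := fun hc => hx2 (Fin.ext hc)
  have hy1' : (y:ℕ) ≠ st := fun hc => hy1 (Fin.ext hc)
  have hy2' : (y:ℕ) ≠ sb := fun hc => hy2 (Fin.ext hc)
  rw [Fin.lt_iff_val_lt_val, vv_val, vv_val]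
  simp only
  split_ifs <;> omega

section Main

variable {Q : ℕ} (b a : Fin Q) {L : ℕ}

/-- the block of ranks -/
private def KK : Finset (Fin Q) := Finset.Icc b a

lemma KK_card (hba : b < a) (hL : L = a.val - b.val + 1) : (KK b a).card = L := by
  have : (b:ℕ) < a := hba
  rw [KK, Fin.card_Icc]; omega

/-- the set of positions occupied by the block under `ρ` -/
private def TT (ρ : Equiv.Perm (Fin Q)) : Finset (Fin Q) := (KK b a).image ρ

lemma TT_card (hba : b < a) (hL : L = a.val - b.val + 1) (ρ : Equiv.Perm (Fin Q)) :
    (TT b a ρ).card = L := by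
  rw [TT, Finset.card_image_of_injective _ ρ.injective, KK_card b a hba hL]

lemma mem_TT_of_mem {ρ : Equiv.Perm (Fin Q)} {x : Fin Q} (hx : x ∈ KK b a) :
    ρ x ∈ TT b a ρ := Finset.mem_image_of_mem ρ hx

lemma a_mem_KK (hba : b < a) : a ∈ KK b a := by
  rw [KK, Finset.mem_Icc]; exact ⟨le_of_lt hba, le_refl a⟩

lemma b_mem_KK (hba : b < a) : b ∈ KK b a := by
  rw [KK, Finset.mem_Icc]; exact ⟨le_refl b, le_of_lt hba⟩

lemma mem_KK_of_mem_TT {ρ : Equiv.Perm (Fin Q)} {t : Fin Q} (ht : t ∈ TT b a ρ) :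
    ρ.symm t ∈ KK b a := by
  rw [TT] at ht
  obtain ⟨x, hx, rfl⟩ := Finset.mem_image.1 ht
  simpa using hx

/-- the slot order isomorphism -/
private def ee (hba : b < a) (hL : L = a.val - b.val + 1) (ρ : Equiv.Perm (Fin Q)) :
    Fin L ≃o {x // x ∈ TT b a ρ} := (TT b a ρ).orderIsoOfFin (TT_card b a hba hL ρ)

lemma sum_T_lt (hba : b < a) (hL : L = a.val - b.val + 1) (ρ : Equiv.Perm (Fin Q)) (k : Fin L) :
    (∑ t ∈ TT b a ρ, if (t < (ee b a hba hL ρ k : Fin Q)) then 1 else 0) = k.val := by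
  rw [← Finset.sum_coe_sort (TT b a ρ) (fun t => if (t < (ee b a hba hL ρ k : Fin Q)) then 1 else 0)]
  rw [← Equiv.sum_comp (ee b a hba hL ρ).toEquiv
    (fun t => if ((t : Fin Q) < (ee b a hba hL ρ k : Fin Q)) then 1 else 0)]
  have : ∀ k' : Fin L, (if ((ee b a hba hL ρ k' : Fin Q) < (ee b a hba hL ρ k : Fin Q)) then 1 else 0)
      = if k' < k then 1 else 0 := by
    intro k'
    congr 1
    simp only [eq_iff_iff]
    rw [Subtype.coe_lt_coe, OrderIso.lt_iff_lt]
  simp only [RelIso.coe_fn_toEquiv]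
  rw [Finset.sum_congr rfl (fun k' _ => this k')]
  rw [← Finset.card_filter]
  have : Finset.univ.filter (fun k' : Fin L => k' < k) = Finset.Iio k := by
    ext x; simp
  rw [this, Fin.card_Iio]

lemma sum_T_gt (hba : b < a) (hL : L = a.val - b.val + 1) (ρ : Equiv.Perm (Fin Q)) (k : Fin L) :
    (∑ t ∈ TT b a ρ, if ((ee b a hba hL ρ k : Fin Q) < t) then 1 else 0) = L - 1 - k.val := by
  rw [← Finset.sum_coe_sort (TT b a ρ) (fun t => if ((ee b a hba hL ρ k : Fin Q) < t) then 1 else 0)]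
  rw [← Equiv.sum_comp (ee b a hba hL ρ).toEquiv
    (fun t => if ((ee b a hba hL ρ k : Fin Q) < (t:Fin Q)) then 1 else 0)]
  have : ∀ k' : Fin L, (if ((ee b a hba hL ρ k : Fin Q) < (ee b a hba hL ρ k' : Fin Q)) then 1 else 0)
      = if k < k' then 1 else 0 := by
    intro k'
    congr 1
    simp only [eq_iff_iff]
    rw [Subtype.coe_lt_coe, OrderIso.lt_iff_lt]
  simp only [RelIso.coe_fn_toEquiv]
  rw [Finset.sum_congr rfl (fun k' _ => this k')]
  rw [← Finset.card_filter]
  have : Finset.univ.filter (fun k' : Fin L => k < k') = Finset.Ioi k := by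
    ext x; simp
  rw [this, Fin.card_Ioi]

variable (hba : b < a) (hL : L = a.val - b.val + 1)

/-- slot index of the top item `a` -/
private def stF (ρ : Equiv.Perm (Fin Q)) : Fin L :=
  (ee b a hba hL ρ).symm ⟨ρ a, mem_TT_of_mem b a (a_mem_KK b a hba)⟩

/-- slot index of the bottom item `b` -/
private def sbF (ρ : Equiv.Perm (Fin Q)) : Fin L :=
  (ee b a hba hL ρ).symm ⟨ρ b, mem_TT_of_mem b a (b_mem_KK b a hba)⟩

lemma stF_lt_sbF {ρ : Equiv.Perm (Fin Q)} (hρ : ρ a < ρ b) :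
    stF b a hba hL ρ < sbF b a hba hL ρ := by
  rw [stF, sbF, OrderIso.lt_iff_lt, Subtype.mk_lt_mk]
  exact hρ

/-- the rearranging permutation at position level, as a function of the data -/
private def uuOf (T : Finset (Fin Q)) (hT : T.card = L) (s1 s2 : Fin L) (h12 : s1 < s2) :
    Equiv.Perm (Fin Q) :=
  Equiv.Perm.ofSubtype ((T.orderIsoOfFin hT).toEquiv.permCongr (vv s1 s2 h12))

/-- the rearranging permutation -/
private def uu (ρ : Equiv.Perm (Fin Q)) (hρ : ρ a < ρ b) : Equiv.Perm (Fin Q) :=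
  uuOf (TT b a ρ) (TT_card b a hba hL ρ) (stF b a hba hL ρ) (sbF b a hba hL ρ)
    (stF_lt_sbF b a hba hL hρ)

lemma uu_apply_of_not_mem {ρ : Equiv.Perm (Fin Q)} (hρ : ρ a < ρ b) {x : Fin Q}
    (hx : x ∉ TT b a ρ) : uu b a hba hL ρ hρ x = x :=
  Equiv.Perm.ofSubtype_apply_of_not_mem _ hx

lemma uu_apply_of_mem {ρ : Equiv.Perm (Fin Q)} (hρ : ρ a < ρ b) {x : Fin Q}
    (hx : x ∈ TT b a ρ) : uu b a hba hL ρ hρ x =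
      (ee b a hba hL ρ (vv (stF b a hba hL ρ) (sbF b a hba hL ρ) (stF_lt_sbF b a hba hL hρ)
        ((ee b a hba hL ρ).symm ⟨x, hx⟩)) : Fin Q) := by
  rw [uu, uuOf, Equiv.Perm.ofSubtype_apply_of_mem _ hx]
  rfl

lemma uu_mem {ρ : Equiv.Perm (Fin Q)} (hρ : ρ a < ρ b) {x : Fin Q}
    (hx : x ∈ TT b a ρ) : uu b a hba hL ρ hρ x ∈ TT b a ρ := by
  rw [uu_apply_of_mem b a hba hL hρ hx]
  exact Subtype.mem _

/-- the canonicalization-like map -/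
private def Phi (ρ : Equiv.Perm (Fin Q)) : Equiv.Perm (Fin Q) :=
  if hρ : ρ a < ρ b then uu b a hba hL ρ hρ * ρ else ρ

lemma Phi_eq {ρ : Equiv.Perm (Fin Q)} (hρ : ρ a < ρ b) :
    Phi b a hba hL ρ = uu b a hba hL ρ hρ * ρ := dif_pos hρ

lemma Phi_apply_of_not_mem {ρ : Equiv.Perm (Fin Q)} (hρ : ρ a < ρ b) {x : Fin Q}
    (hx : x ∉ KK b a) : Phi b a hba hL ρ x = ρ x := by
  rw [Phi_eq b a hba hL hρ, Equiv.Perm.mul_apply]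
  apply uu_apply_of_not_mem
  intro hmem
  apply hx
  have := mem_KK_of_mem_TT b a hmem
  simpa using this

lemma Phi_apply_of_mem {ρ : Equiv.Perm (Fin Q)} (hρ : ρ a < ρ b) {x : Fin Q}
    (hx : x ∈ KK b a) : Phi b a hba hL ρ x =
      (ee b a hba hL ρ (vv (stF b a hba hL ρ) (sbF b a hba hL ρ) (stF_lt_sbF b a hba hL hρ)
        ((ee b a hba hL ρ).symm ⟨ρ x, mem_TT_of_mem b a hx⟩)) : Fin Q) := by
  rw [Phi_eq b a hba hL hρ, Equiv.Perm.mul_apply,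
    uu_apply_of_mem b a hba hL hρ (mem_TT_of_mem b a hx)]

include hba hL in
lemma L_ge_two : 2 ≤ L := by
  have : (b:ℕ) < a := hba
  omega

/-- gap between slot indices -/
private def dN (ρ : Equiv.Perm (Fin Q)) : ℕ := (sbF b a hba hL ρ).val - (stF b a hba hL ρ).val

lemma dN_pos {ρ : Equiv.Perm (Fin Q)} (hρ : ρ a < ρ b) : 1 ≤ dN b a hba hL ρ := by
  have := stF_lt_sbF b a hba hL (ρ := ρ) hρ
  have : (stF b a hba hL ρ : ℕ) < (sbF b a hba hL ρ : ℕ) := this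
  rw [dN]; omega

lemma dN_lt {ρ : Equiv.Perm (Fin Q)} : dN b a hba hL ρ ≤ L - 1 := by
  have := (sbF b a hba hL ρ).isLt
  rw [dN]; omega

lemma Phi_apply_b {ρ : Equiv.Perm (Fin Q)} (hρ : ρ a < ρ b) :
    Phi b a hba hL ρ b = (ee b a hba hL ρ ⟨0, by { have := L_ge_two b a hba hL; omega }⟩ : Fin Q) := by
  rw [Phi_apply_of_mem b a hba hL hρ (b_mem_KK b a hba)]
  congr 1
  exact congrArg _ (Fin.ext (vv_apply_sb _ _ _))

lemma Phi_apply_a {ρ : Equiv.Perm (Fin Q)} (hρ : ρ a < ρ b) :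
    Phi b a hba hL ρ a = (ee b a hba hL ρ
      ⟨L - dN b a hba hL ρ, by { have := L_ge_two b a hba hL; have := dN_pos b a hba hL hρ; omega }⟩ : Fin Q) := by
  rw [Phi_apply_of_mem b a hba hL hρ (a_mem_KK b a hba)]
  congr 1
  exact congrArg _ (Fin.ext (vv_apply_st _ _ _))

lemma Phi_mid_iff {ρ : Equiv.Perm (Fin Q)} (hρ : ρ a < ρ b) {x y : Fin Q}
    (hx : x ∈ KK b a) (hxa : x ≠ a) (hxb : x ≠ b)
    (hy : y ∈ KK b a) (hya : y ≠ a) (hyb : y ≠ b) :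
    Phi b a hba hL ρ x < Phi b a hba hL ρ y ↔ ρ x < ρ y := by
  have key : ∀ z : Fin Q, ∀ hz : z ∈ KK b a, z ≠ a → z ≠ b →
      ((ee b a hba hL ρ).symm ⟨ρ z, mem_TT_of_mem b a hz⟩ ≠ stF b a hba hL ρ ∧
       (ee b a hba hL ρ).symm ⟨ρ z, mem_TT_of_mem b a hz⟩ ≠ sbF b a hba hL ρ) := by
    intro z hz hza hzb
    constructor
    · intro hc
      apply hza
      rw [stF] at hc
      have := (ee b a hba hL ρ).symm.injective hc
      have : ρ z = ρ a := Subtype.mk_eq_mk.1 this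
      exact ρ.injective this
    · intro hc
      apply hzb
      rw [sbF] at hc
      have := (ee b a hba hL ρ).symm.injective hc
      have : ρ z = ρ b := Subtype.mk_eq_mk.1 this
      exact ρ.injective this
  have mono : ∀ z w : Fin Q, ∀ hz : z ∈ KK b a, ∀ hw : w ∈ KK b a, z ≠ a → z ≠ b →
      w ≠ a → w ≠ b → ρ z < ρ w → Phi b a hba hL ρ z < Phi b a hba hL ρ w := by
    intro z w hz hw hza hzb hwa hwb hzw
    rw [Phi_apply_of_mem b a hba hL hρ hz, Phi_apply_of_mem b a hba hL hρ hw,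
      Subtype.coe_lt_coe, OrderIso.lt_iff_lt]
    obtain ⟨h1, h2⟩ := key z hz hza hzb
    obtain ⟨h3, h4⟩ := key w hw hwa hwb
    apply vv_mono _ _ _ h1 h2 h3 h4
    rw [OrderIso.lt_iff_lt, Subtype.mk_lt_mk]
    exact hzw
  constructor
  · intro hlt
    rcases lt_trichotomy (ρ x) (ρ y) with h1 | h1 | h1
    · exact h1
    · exfalso; have : x = y := ρ.injective h1; subst this; exact lt_irrefl _ hlt
    · exfalso
      have := mono y x hy hx hya hyb hxa hxb h1
      exact lt_asymm hlt this
  · exact mono x y hx hy hxa hxb hya hyb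

lemma imageK_Phi {ρ : Equiv.Perm (Fin Q)} (hρ : ρ a < ρ b) :
    (KK b a).image (Phi b a hba hL ρ) = TT b a ρ := by
  apply Finset.eq_of_subset_of_card_le
  · intro t ht
    obtain ⟨x, hx, rfl⟩ := Finset.mem_image.1 ht
    rw [Phi_eq b a hba hL hρ, Equiv.Perm.mul_apply]
    exact uu_mem b a hba hL hρ (mem_TT_of_mem b a hx)
  · rw [Finset.card_image_of_injective _ (Phi b a hba hL ρ).injective,
      TT_card b a hba hL ρ, KK_card b a hba hL]

lemma sumK_rho (ρ : Equiv.Perm (Fin Q)) (g : Fin Q → ℕ) :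
    ∑ x ∈ KK b a, g (ρ x) = ∑ t ∈ TT b a ρ, g t := by
  rw [TT]
  exact (Finset.sum_image fun x _ y _ hxy => ρ.injective hxy).symm

lemma sumK_Phi {ρ : Equiv.Perm (Fin Q)} (hρ : ρ a < ρ b) (g : Fin Q → ℕ) :
    ∑ x ∈ KK b a, g (Phi b a hba hL ρ x) = ∑ t ∈ TT b a ρ, g t := by
  rw [← imageK_Phi b a hba hL hρ]
  exact (Finset.sum_image fun x _ y _ hxy => (Phi b a hba hL ρ).injective hxy).symm

/-- number of inversions -/
def NN {Q : ℕ} (ς : Equiv.Perm (Fin Q)) : ℕ :=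
  ∑ x : Fin Q, ∑ y : Fin Q, if x < y ∧ ς y < ς x then 1 else 0

omit hba hL

include hba in
lemma Kdecomp : KK b a = insert b (insert a (Finset.Ioo b a)) := by
  ext x
  simp only [KK, Finset.mem_Icc, Finset.mem_insert, Finset.mem_Ioo]
  constructor
  · rintro ⟨h1, h2⟩
    rcases eq_or_lt_of_le h1 with h1' | h1'
    · exact Or.inl h1'.symm
    rcases eq_or_lt_of_le h2 with h2' | h2'
    · exact Or.inr (Or.inl h2')
    · exact Or.inr (Or.inr ⟨h1', h2'⟩)
  · rintro (rfl | rfl | ⟨h1, h2⟩)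
    · exact ⟨le_refl _, le_of_lt hba⟩
    · exact ⟨le_of_lt hba, le_refl _⟩
    · exact ⟨le_of_lt h1, le_of_lt h2⟩

include hba in
lemma b_notmem : b ∉ insert a (Finset.Ioo b a) := by
  simp only [Finset.mem_insert, Finset.mem_Ioo]
  push_neg
  exact ⟨Fin.ne_of_lt hba, fun h => absurd h (lt_irrefl b)⟩

lemma a_notmem : a ∉ Finset.Ioo b a := by
  simp only [Finset.mem_Ioo]
  push_neg
  intro _
  exact le_refl a

include hba in
lemma sumK_decomp (g : Fin Q → ℕ) :
    ∑ x ∈ KK b a, g x = g b + g a + ∑ x ∈ Finset.Ioo b a, g x := by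
  rw [Kdecomp b a hba, Finset.sum_insert (b_notmem b a hba), Finset.sum_insert (a_notmem b a)]
  omega

include hba in
lemma pieceII (ς : Equiv.Perm (Fin Q)) :
    (∑ x ∈ KK b a, ∑ y ∈ KK b a, if x < y ∧ ς y < ς x then 1 else 0) =
      (if ς a < ς b then 1 else 0)
      + (∑ m ∈ Finset.Ioo b a, if ς m < ς b then 1 else 0)
      + (∑ m ∈ Finset.Ioo b a, if ς a < ς m then 1 else 0)
      + (∑ x ∈ Finset.Ioo b a, ∑ y ∈ Finset.Ioo b a, if x < y ∧ ς y < ς x then 1 else 0) := by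
  rw [sumK_decomp b a hba]
  have e1 : ∑ y ∈ KK b a, (if b < y ∧ ς y < ς b then 1 else 0) =
      (if ς a < ς b then 1 else 0) + ∑ m ∈ Finset.Ioo b a, (if ς m < ς b then 1 else 0) := by
    rw [sumK_decomp b a hba]
    have h1 : (if b < b ∧ ς b < ς b then 1 else 0) = 0 := by
      simp [lt_irrefl]
    have h2 : (if b < a ∧ ς a < ς b then 1 else 0) = if ς a < ς b then 1 else 0 := by
      simp [hba]
    have h3 : ∀ m ∈ Finset.Ioo b a, (if b < m ∧ ς m < ς b then 1 else 0) =
        if ς m < ς b then 1 else 0 := by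
      intro m hm
      rw [Finset.mem_Ioo] at hm
      simp [hm.1]
    rw [h1, h2, Finset.sum_congr rfl h3]
    omega
  have e2 : ∑ y ∈ KK b a, (if a < y ∧ ς y < ς a then 1 else 0) = 0 := by
    apply Finset.sum_eq_zero
    intro y hy
    rw [KK, Finset.mem_Icc] at hy
    have : ¬ a < y := not_lt.2 hy.2
    simp [this]
  have e3 : ∀ x ∈ Finset.Ioo b a, (∑ y ∈ KK b a, if x < y ∧ ς y < ς x then 1 else 0)
      = (if ς a < ς x then 1 else 0)
        + ∑ y ∈ Finset.Ioo b a, (if x < y ∧ ς y < ς x then 1 else 0) := by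
    intro x hx
    rw [Finset.mem_Ioo] at hx
    rw [sumK_decomp b a hba]
    have h1 : (if x < b ∧ ς b < ς x then 1 else 0) = 0 := by
      have : ¬ x < b := not_lt.2 (le_of_lt hx.1)
      simp [this]
    have h2 : (if x < a ∧ ς a < ς x then 1 else 0) = if ς a < ς x then 1 else 0 := by
      simp [hx.2]
    rw [h1, h2]
    omega
  rw [e1, e2, Finset.sum_congr rfl e3, Finset.sum_add_distrib]
  omega

lemma pieceIO (ς ρ : Equiv.Perm (Fin Q)) (hout : ∀ y, y ∉ KK b a → ς y = ρ y)
    (hsum : ∀ g : Fin Q → ℕ, ∑ x ∈ KK b a, g (ς x) = ∑ t ∈ TT b a ρ, g t) :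
    (∑ x ∈ KK b a, ∑ y ∈ (KK b a)ᶜ, if x < y ∧ ς y < ς x then 1 else 0) =
      ∑ y ∈ (KK b a)ᶜ, if a < y then (∑ t ∈ TT b a ρ, if ρ y < t then 1 else 0) else 0 := by
  rw [Finset.sum_comm]
  apply Finset.sum_congr rfl
  intro y hy
  have hy' : y ∉ KK b a := Finset.mem_compl.1 hy
  have hyρ : ς y = ρ y := hout y hy'
  have hy'' : ¬ (b ≤ y ∧ y ≤ a) := by simpa [KK, Finset.mem_Icc] using hy'
  by_cases hay : a < y
  · rw [if_pos hay]
    rw [← hsum (fun t => if ρ y < t then 1 else 0)]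
    apply Finset.sum_congr rfl
    intro x hx
    rw [KK, Finset.mem_Icc] at hx
    have hxy : x < y := lt_of_le_of_lt hx.2 hay
    simp only [hxy, true_and, hyρ]
  · rw [if_neg hay]
    apply Finset.sum_eq_zero
    intro x hx
    rw [KK, Finset.mem_Icc] at hx
    have hyb : y < b := by
      rcases not_and_or.1 hy'' with h | h
      · exact lt_of_not_ge h
      · exact absurd (le_of_not_gt hay) h
    have : ¬ x < y := not_lt.2 (le_of_lt (lt_of_lt_of_le hyb hx.1))
    simp [this]

lemma pieceOI (ς ρ : Equiv.Perm (Fin Q)) (hout : ∀ y, y ∉ KK b a → ς y = ρ y)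
    (hsum : ∀ g : Fin Q → ℕ, ∑ x ∈ KK b a, g (ς x) = ∑ t ∈ TT b a ρ, g t) :
    (∑ x ∈ (KK b a)ᶜ, ∑ y ∈ KK b a, if x < y ∧ ς y < ς x then 1 else 0) =
      ∑ x ∈ (KK b a)ᶜ, if x < b then (∑ t ∈ TT b a ρ, if t < ρ x then 1 else 0) else 0 := by
  apply Finset.sum_congr rfl
  intro x hx
  have hx' : x ∉ KK b a := Finset.mem_compl.1 hx
  have hxρ : ς x = ρ x := hout x hx'
  have hx'' : ¬ (b ≤ x ∧ x ≤ a) := by simpa [KK, Finset.mem_Icc] using hx'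
  by_cases hxb : x < b
  · rw [if_pos hxb]
    rw [← hsum (fun t => if t < ρ x then 1 else 0)]
    apply Finset.sum_congr rfl
    intro y hy
    rw [KK, Finset.mem_Icc] at hy
    have hxy : x < y := lt_of_lt_of_le hxb hy.1
    simp only [hxy, true_and, hxρ]
  · rw [if_neg hxb]
    apply Finset.sum_eq_zero
    intro y hy
    rw [KK, Finset.mem_Icc] at hy
    have hax : a < x := by
      rcases not_and_or.1 hx'' with h | h
      · exact absurd (le_of_not_gt hxb) h
      · exact lt_of_not_ge h
    have : ¬ x < y := not_lt.2 (le_of_lt (lt_of_le_of_lt hy.2 hax))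
    simp [this]

include hba hL in
lemma ee_sbF (ρ : Equiv.Perm (Fin Q)) :
    (ee b a hba hL ρ (sbF b a hba hL ρ) : Fin Q) = ρ b := by
  rw [sbF, OrderIso.apply_symm_apply]

include hba hL in
lemma ee_stF (ρ : Equiv.Perm (Fin Q)) :
    (ee b a hba hL ρ (stF b a hba hL ρ) : Fin Q) = ρ a := by
  rw [stF, OrderIso.apply_symm_apply]

include hba hL in
lemma NN_Phi (ρ : Equiv.Perm (Fin Q)) (hρ : ρ a < ρ b) :
    NN ρ = NN (Phi b a hba hL ρ) + (L - 1) := by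
  set τ := Phi b a hba hL ρ with hτ
  -- splitting of the full inversion count
  have inner : ∀ (s : Finset (Fin Q)) (F : Fin Q → Fin Q → ℕ),
      (∑ x ∈ s, ∑ y : Fin Q, F x y) =
        (∑ x ∈ s, ∑ y ∈ KK b a, F x y) + ∑ x ∈ s, ∑ y ∈ (KK b a)ᶜ, F x y := by
    intro s F
    rw [← Finset.sum_add_distrib]
    apply Finset.sum_congr rfl
    intro x _
    rw [Finset.sum_add_sum_compl]
  have split : ∀ ς : Equiv.Perm (Fin Q), NN ς =
      ((∑ x ∈ KK b a, ∑ y ∈ KK b a, if x < y ∧ ς y < ς x then 1 else 0)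
        + ∑ x ∈ KK b a, ∑ y ∈ (KK b a)ᶜ, if x < y ∧ ς y < ς x then 1 else 0)
      + ((∑ x ∈ (KK b a)ᶜ, ∑ y ∈ KK b a, if x < y ∧ ς y < ς x then 1 else 0)
        + ∑ x ∈ (KK b a)ᶜ, ∑ y ∈ (KK b a)ᶜ, if x < y ∧ ς y < ς x then 1 else 0) := by
    intro ς
    rw [NN, ← Finset.sum_add_sum_compl (KK b a)
      (fun x => ∑ y : Fin Q, if x < y ∧ ς y < ς x then 1 else 0), inner, inner]
  -- the pieces involving an index outside the block agree
  have hOO : (∑ x ∈ (KK b a)ᶜ, ∑ y ∈ (KK b a)ᶜ, if x < y ∧ τ y < τ x then 1 else 0)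
      = ∑ x ∈ (KK b a)ᶜ, ∑ y ∈ (KK b a)ᶜ, if x < y ∧ ρ y < ρ x then 1 else 0 := by
    apply Finset.sum_congr rfl
    intro x hx
    apply Finset.sum_congr rfl
    intro y hy
    rw [hτ, Phi_apply_of_not_mem b a hba hL hρ (Finset.mem_compl.1 hx),
      Phi_apply_of_not_mem b a hba hL hρ (Finset.mem_compl.1 hy)]
  have hIO : (∑ x ∈ KK b a, ∑ y ∈ (KK b a)ᶜ, if x < y ∧ τ y < τ x then 1 else 0)
      = ∑ x ∈ KK b a, ∑ y ∈ (KK b a)ᶜ, if x < y ∧ ρ y < ρ x then 1 else 0 := by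
    rw [pieceIO b a τ ρ (fun y hy => Phi_apply_of_not_mem b a hba hL hρ hy)
        (fun g => sumK_Phi b a hba hL hρ g),
      pieceIO b a ρ ρ (fun y _ => rfl) (fun g => sumK_rho b a ρ g)]
  have hOI : (∑ x ∈ (KK b a)ᶜ, ∑ y ∈ KK b a, if x < y ∧ τ y < τ x then 1 else 0)
      = ∑ x ∈ (KK b a)ᶜ, ∑ y ∈ KK b a, if x < y ∧ ρ y < ρ x then 1 else 0 := by
    rw [pieceOI b a τ ρ (fun y hy => Phi_apply_of_not_mem b a hba hL hρ hy)
        (fun g => sumK_Phi b a hba hL hρ g),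
      pieceOI b a ρ ρ (fun y _ => rfl) (fun g => sumK_rho b a ρ g)]
  -- the middle-middle sums agree
  have hMM : (∑ x ∈ Finset.Ioo b a, ∑ y ∈ Finset.Ioo b a, if x < y ∧ τ y < τ x then 1 else 0)
      = ∑ x ∈ Finset.Ioo b a, ∑ y ∈ Finset.Ioo b a, if x < y ∧ ρ y < ρ x then 1 else 0 := by
    apply Finset.sum_congr rfl
    intro x hx
    apply Finset.sum_congr rfl
    intro y hy
    rw [Finset.mem_Ioo] at hx hy
    congr 1
    simp only [eq_iff_iff]
    constructor
    · rintro ⟨h1, h2⟩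
      refine ⟨h1, ?_⟩
      rw [hτ, Phi_mid_iff b a hba hL hρ (by rw [KK, Finset.mem_Icc]; exact ⟨le_of_lt hy.1, le_of_lt hy.2⟩)
        (Fin.ne_of_lt hy.2) (Fin.ne_of_gt hy.1)
        (by rw [KK, Finset.mem_Icc]; exact ⟨le_of_lt hx.1, le_of_lt hx.2⟩)
        (Fin.ne_of_lt hx.2) (Fin.ne_of_gt hx.1)] at h2
      exact h2
    · rintro ⟨h1, h2⟩
      refine ⟨h1, ?_⟩
      rw [hτ, Phi_mid_iff b a hba hL hρ (by rw [KK, Finset.mem_Icc]; exact ⟨le_of_lt hy.1, le_of_lt hy.2⟩)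
        (Fin.ne_of_lt hy.2) (Fin.ne_of_gt hy.1)
        (by rw [KK, Finset.mem_Icc]; exact ⟨le_of_lt hx.1, le_of_lt hx.2⟩)
        (Fin.ne_of_lt hx.2) (Fin.ne_of_gt hx.1)]
      exact h2
  -- count evaluations
  have hdlt : dN b a hba hL ρ ≤ L - 1 := dN_lt b a hba hL
  have hdpos : 1 ≤ dN b a hba hL ρ := dN_pos b a hba hL hρ
  have hL2 : 2 ≤ L := L_ge_two b a hba hL
  have hst_lt : (stF b a hba hL ρ : ℕ) < (sbF b a hba hL ρ : ℕ) := stF_lt_sbF b a hba hL hρ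
  have hsb_lt : (sbF b a hba hL ρ : ℕ) < L := (sbF b a hba hL ρ).isLt
  have hd : dN b a hba hL ρ = (sbF b a hba hL ρ : ℕ) - (stF b a hba hL ρ : ℕ) := rfl
  have cnt_rho_b : (∑ x ∈ KK b a, if ρ x < ρ b then 1 else 0) = (sbF b a hba hL ρ : ℕ) := by
    rw [sumK_rho b a ρ (fun t => if t < ρ b then 1 else 0), ← ee_sbF b a hba hL ρ]
    exact sum_T_lt b a hba hL ρ _
  have cnt_rho_a : (∑ x ∈ KK b a, if ρ a < ρ x then 1 else 0) = L - 1 - (stF b a hba hL ρ : ℕ) := by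
    rw [sumK_rho b a ρ (fun t => if ρ a < t then 1 else 0), ← ee_stF b a hba hL ρ]
    exact sum_T_gt b a hba hL ρ _
  have cnt_tau_b : (∑ x ∈ KK b a, if τ x < τ b then 1 else 0) = 0 := by
    rw [hτ, sumK_Phi b a hba hL hρ (fun t => if t < Phi b a hba hL ρ b then 1 else 0),
      Phi_apply_b b a hba hL hρ]
    exact sum_T_lt b a hba hL ρ _
  have cnt_tau_a : (∑ x ∈ KK b a, if τ a < τ x then 1 else 0)
      = L - 1 - (L - dN b a hba hL ρ) := by
    rw [hτ, sumK_Phi b a hba hL hρ (fun t => if Phi b a hba hL ρ a < t then 1 else 0),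
      Phi_apply_a b a hba hL hρ]
    exact sum_T_gt b a hba hL ρ _
  have end_rho : (if ρ a < ρ b then 1 else 0) = 1 := if_pos hρ
  have end_tau : (if τ a < τ b then 1 else 0) = 0 := by
    rw [hτ, Phi_apply_a b a hba hL hρ, Phi_apply_b b a hba hL hρ]
    apply if_neg
    rw [Subtype.coe_lt_coe, OrderIso.lt_iff_lt]
    intro hc
    have := Fin.lt_iff_val_lt_val.1 hc
    simp only at this
    omega
  -- endpoint sums over the block decompose
  have dec_rho_b := sumK_decomp b a hba (fun x => if ρ x < ρ b then 1 else 0)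
  have dec_rho_a := sumK_decomp b a hba (fun x => if ρ a < ρ x then 1 else 0)
  have dec_tau_b := sumK_decomp b a hba (fun x => if τ x < τ b then 1 else 0)
  have dec_tau_a := sumK_decomp b a hba (fun x => if τ a < τ x then 1 else 0)
  have z1 : (if ρ b < ρ b then 1 else 0) = 0 := if_neg (lt_irrefl _)
  have z2 : (if ρ a < ρ a then 1 else 0) = 0 := if_neg (lt_irrefl _)
  have z3 : (if τ b < τ b then 1 else 0) = 0 := if_neg (lt_irrefl _)
  have z4 : (if τ a < τ a then 1 else 0) = 0 := if_neg (lt_irrefl _)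
  -- put everything together
  rw [split ρ, split τ, hOO, hIO, hOI, pieceII b a hba ρ, pieceII b a hba τ, hMM]
  omega

omit hba hL in
lemma uuOf_congr {T T' : Finset (Fin Q)} {hT : T.card = L} {hT' : T'.card = L}
    {s1 s2 s1' s2' : Fin L} {h12 : s1 < s2} {h12' : s1' < s2'}
    (hTT : T = T') (h1 : s1 = s1') (h2 : s2 = s2') :
    uuOf T hT s1 s2 h12 = uuOf T' hT' s1' s2' h12' := by
  subst hTT h1 h2
  rfl

include hba hL in
lemma Phi_lt {ρ : Equiv.Perm (Fin Q)} (hρ : ρ a < ρ b) :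
    Phi b a hba hL ρ b < Phi b a hba hL ρ a := by
  rw [Phi_apply_a b a hba hL hρ, Phi_apply_b b a hba hL hρ, Subtype.coe_lt_coe,
    OrderIso.lt_iff_lt]
  rw [Fin.lt_iff_val_lt_val]
  simp only
  have := dN_lt b a hba hL (ρ := ρ)
  have := L_ge_two b a hba hL
  omega

include hba hL in
lemma Psi_inj {ρ ρ' : Equiv.Perm (Fin Q)} (hρ : ρ a < ρ b) (hρ' : ρ' a < ρ' b)
    (hPhi : Phi b a hba hL ρ = Phi b a hba hL ρ')
    (hst : stF b a hba hL ρ = stF b a hba hL ρ') : ρ = ρ' := by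
  have hTT : TT b a ρ = TT b a ρ' := by
    rw [← imageK_Phi b a hba hL hρ, ← imageK_Phi b a hba hL hρ', hPhi]
  -- recover the gap from the canonical image
  have hcnt : ∀ (ρ₀ : Equiv.Perm (Fin Q)) (hρ₀ : ρ₀ a < ρ₀ b),
      (∑ t ∈ TT b a ρ₀, if t < Phi b a hba hL ρ₀ a then 1 else 0) = L - dN b a hba hL ρ₀ := by
    intro ρ₀ hρ₀
    rw [Phi_apply_a b a hba hL hρ₀]
    exact sum_T_lt b a hba hL ρ₀ _
  have hdd : L - dN b a hba hL ρ = L - dN b a hba hL ρ' := by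
    rw [← hcnt ρ hρ, ← hcnt ρ' hρ', hTT, hPhi]
  have hd1 : 1 ≤ dN b a hba hL ρ := dN_pos b a hba hL hρ
  have hd2 : dN b a hba hL ρ ≤ L - 1 := dN_lt b a hba hL
  have hd1' : 1 ≤ dN b a hba hL ρ' := dN_pos b a hba hL hρ'
  have hd2' : dN b a hba hL ρ' ≤ L - 1 := dN_lt b a hba hL
  have hL2 : 2 ≤ L := L_ge_two b a hba hL
  have hdeq : dN b a hba hL ρ = dN b a hba hL ρ' := by omega
  have hsb : sbF b a hba hL ρ = sbF b a hba hL ρ' := by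
    have e1 : (stF b a hba hL ρ : ℕ) < (sbF b a hba hL ρ : ℕ) := stF_lt_sbF b a hba hL hρ
    have e2 : (stF b a hba hL ρ' : ℕ) < (sbF b a hba hL ρ' : ℕ) := stF_lt_sbF b a hba hL hρ'
    have e3 : (stF b a hba hL ρ : ℕ) = (stF b a hba hL ρ' : ℕ) := by rw [hst]
    have e4 : dN b a hba hL ρ = (sbF b a hba hL ρ : ℕ) - (stF b a hba hL ρ : ℕ) := rfl
    have e5 : dN b a hba hL ρ' = (sbF b a hba hL ρ' : ℕ) - (stF b a hba hL ρ' : ℕ) := rfl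
    apply Fin.ext
    omega
  have huu : uu b a hba hL ρ hρ = uu b a hba hL ρ' hρ' :=
    uuOf_congr hTT hst hsb
  have h1 : uu b a hba hL ρ hρ * ρ = uu b a hba hL ρ' hρ' * ρ' := by
    rw [← Phi_eq b a hba hL hρ, ← Phi_eq b a hba hL hρ', hPhi]
  rw [huu] at h1
  exact mul_left_cancel h1

include hba hL in
lemma key_ineq (φ : ℝ) (hφ0 : 0 ≤ φ) :
    ∑ ρ ∈ Finset.univ.filter (fun ρ : Equiv.Perm (Fin Q) => ρ a < ρ b), φ ^ NN ρ
      ≤ (L:ℝ) * φ ^ (L-1) *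
        ∑ ρ ∈ Finset.univ.filter (fun ρ : Equiv.Perm (Fin Q) => ρ b < ρ a), φ ^ NN ρ := by
  classical
  set A := Finset.univ.filter (fun ρ : Equiv.Perm (Fin Q) => ρ a < ρ b) with hA
  set B := Finset.univ.filter (fun ρ : Equiv.Perm (Fin Q) => ρ b < ρ a) with hB
  have memA : ∀ ρ ∈ A, ρ a < ρ b := fun ρ hρ => (Finset.mem_filter.1 hρ).2
  have step1 : ∑ ρ ∈ A, φ ^ NN ρ = φ ^ (L-1) * ∑ ρ ∈ A, φ ^ NN (Phi b a hba hL ρ) := by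
    rw [Finset.mul_sum]
    apply Finset.sum_congr rfl
    intro ρ hρ
    rw [NN_Phi b a hba hL ρ (memA ρ hρ), pow_add, mul_comm]
  have step2 : ∑ ρ ∈ A, φ ^ NN (Phi b a hba hL ρ)
      = ∑ q ∈ A.image (fun ρ => (Phi b a hba hL ρ, stF b a hba hL ρ)),
          φ ^ NN q.1 := by
    rw [Finset.sum_image]
    intro ρ hρ ρ' hρ' heq
    rw [Prod.mk.injEq] at heq
    exact Psi_inj b a hba hL (memA ρ hρ) (memA ρ' hρ') heq.1 heq.2
  have step3 : ∑ q ∈ A.image (fun ρ => (Phi b a hba hL ρ, stF b a hba hL ρ)), φ ^ NN q.1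
      ≤ ∑ q ∈ B ×ˢ (Finset.univ : Finset (Fin L)), φ ^ NN q.1 := by
    apply Finset.sum_le_sum_of_subset_of_nonneg
    · intro q hq
      obtain ⟨ρ, hρ, rfl⟩ := Finset.mem_image.1 hq
      rw [Finset.mem_product]
      constructor
      · rw [hB, Finset.mem_filter]
        exact ⟨Finset.mem_univ _, Phi_lt b a hba hL (memA ρ hρ)⟩
      · exact Finset.mem_univ _
    · intro q _ _
      exact pow_nonneg hφ0 _
  have step4 : ∑ q ∈ B ×ˢ (Finset.univ : Finset (Fin L)), φ ^ NN q.1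
      = (L:ℝ) * ∑ ρ ∈ B, φ ^ NN ρ := by
    rw [Finset.sum_product, Finset.mul_sum]
    apply Finset.sum_congr rfl
    intro ρ _
    simp [Finset.sum_const, Finset.card_univ, nsmul_eq_mul]
  have hφpow : (0:ℝ) ≤ φ ^ (L-1) := pow_nonneg hφ0 _
  calc ∑ ρ ∈ A, φ ^ NN ρ = φ ^ (L-1) * ∑ ρ ∈ A, φ ^ NN (Phi b a hba hL ρ) := step1
    _ ≤ φ ^ (L-1) * ((L:ℝ) * ∑ ρ ∈ B, φ ^ NN ρ) := by
        apply mul_le_mul_of_nonneg_left _ hφpow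
        rw [step2]
        exact le_trans step3 (le_of_eq step4)
    _ = (L:ℝ) * φ ^ (L-1) * ∑ ρ ∈ B, φ ^ NN ρ := by ring

end Main

lemma NN_card {Q : ℕ} (ς : Equiv.Perm (Fin Q)) :
    NN ς = ((Finset.univ : Finset (Fin Q × Fin Q)).filter
      (fun p => p.1 < p.2 ∧ ς p.2 < ς p.1)).card := by
  rw [NN, Finset.card_filter, ← Finset.univ_product_univ]
  exact (Finset.sum_product (f := fun p : Fin Q × Fin Q => if p.1 < p.2 ∧ ς p.2 < ς p.1 then 1 else 0)
    (s := Finset.univ) (t := Finset.univ)).symm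

lemma kendall_eq_NN {Q : ℕ} (σ σk : Equiv.Perm (Fin Q)) :
    kendall σ σk = NN (σ * σk⁻¹) := by
  classical
  rw [NN_card, kendall]
  set ς := σ * σk⁻¹ with hς
  have hςk : ∀ x : Fin Q, ς (σk x) = σ x := by
    intro x
    rw [hς, Equiv.Perm.mul_apply, Equiv.Perm.coe_inv, Equiv.symm_apply_apply]
  apply Finset.card_bij'
    (i := fun p _ => if σk p.1 < σk p.2 then (σk p.1, σk p.2) else (σk p.2, σk p.1))
    (j := fun q _ => if σk⁻¹ q.1 < σk⁻¹ q.2 then (σk⁻¹ q.1, σk⁻¹ q.2) else (σk⁻¹ q.2, σk⁻¹ q.1))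
  · -- maps into target
    intro p hp
    rw [Finset.mem_filter] at hp
    obtain ⟨-, hlt, hniff⟩ := hp
    have hne : p.1 ≠ p.2 := Fin.ne_of_lt hlt
    by_cases hk : σk p.1 < σk p.2
    · rw [if_pos hk, Finset.mem_filter]
      refine ⟨Finset.mem_univ _, hk, ?_⟩
      simp only [hςk]
      have : ¬ σ p.1 < σ p.2 := fun hc => hniff (iff_of_true hc hk)
      exact lt_of_le_of_ne (le_of_not_gt this) fun hc => hne (σ.injective hc.symm)
    · rw [if_neg hk, Finset.mem_filter]
      have hk' : σk p.2 < σk p.1 :=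
        lt_of_le_of_ne (le_of_not_gt hk) fun hc => hne (σk.injective hc.symm)
      refine ⟨Finset.mem_univ _, hk', ?_⟩
      simp only [hςk]
      by_contra hc
      exact hniff (iff_of_false hc hk)
  · -- inverse maps into source
    intro q hq
    rw [Finset.mem_filter] at hq
    obtain ⟨-, hlt, hinv⟩ := hq
    have hne : q.1 ≠ q.2 := Fin.ne_of_lt hlt
    have hσ1 : σ (σk⁻¹ q.1) = ς q.1 := by rw [← hςk (σk⁻¹ q.1), Equiv.Perm.coe_inv, Equiv.apply_symm_apply]
    have hσ2 : σ (σk⁻¹ q.2) = ς q.2 := by rw [← hςk (σk⁻¹ q.2), Equiv.Perm.coe_inv, Equiv.apply_symm_apply]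
    have hσk1 : σk (σk⁻¹ q.1) = q.1 := σk.apply_symm_apply _
    have hσk2 : σk (σk⁻¹ q.2) = q.2 := σk.apply_symm_apply _
    by_cases hk : σk⁻¹ q.1 < σk⁻¹ q.2
    · rw [if_pos hk, Finset.mem_filter]
      refine ⟨Finset.mem_univ _, hk, ?_⟩
      simp only [hσ1, hσ2, hσk1, hσk2]
      intro hc
      have h1 : ς q.1 < ς q.2 := hc.2 hlt
      exact lt_asymm h1 hinv
    · rw [if_neg hk, Finset.mem_filter]
      have hne' : σk⁻¹ q.1 ≠ σk⁻¹ q.2 := fun hc => hne ((σk⁻¹).injective hc)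
      have hk' : σk⁻¹ q.2 < σk⁻¹ q.1 := lt_of_le_of_ne (le_of_not_gt hk) (Ne.symm hne')
      refine ⟨Finset.mem_univ _, hk', ?_⟩
      simp only [hσ1, hσ2, hσk1, hσk2]
      intro hc
      have h1 : ¬ q.2 < q.1 := not_lt.2 (le_of_lt hlt)
      have : ς q.2 < ς q.1 := hinv
      exact h1 (hc.1 this)
  · -- left inverse
    intro p hp
    rw [Finset.mem_filter] at hp
    obtain ⟨-, hlt, -⟩ := hp
    have hne : p.1 ≠ p.2 := Fin.ne_of_lt hlt
    by_cases hk : σk p.1 < σk p.2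
    · simp only [if_pos hk, Equiv.Perm.coe_inv, Equiv.symm_apply_apply]
      rw [if_pos hlt]
    · have hk' : σk p.2 < σk p.1 :=
        lt_of_le_of_ne (le_of_not_gt hk) fun hc => hne (σk.injective hc.symm)
      simp only [if_neg hk, Equiv.Perm.coe_inv, Equiv.symm_apply_apply]
      rw [if_neg (not_lt.2 (le_of_lt hlt))]
  · -- right inverse
    intro q hq
    rw [Finset.mem_filter] at hq
    obtain ⟨-, hlt, -⟩ := hq
    have hne : q.1 ≠ q.2 := Fin.ne_of_lt hlt
    by_cases hk : σk⁻¹ q.1 < σk⁻¹ q.2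
    · simp only [if_pos hk]; simp only [Equiv.Perm.coe_inv, Equiv.apply_symm_apply]
      rw [if_pos hlt]
    · have hne' : σk⁻¹ q.1 ≠ σk⁻¹ q.2 := fun hc => hne ((σk⁻¹).injective hc)
      have hk' : σk⁻¹ q.2 < σk⁻¹ q.1 := lt_of_le_of_ne (le_of_not_gt hk) (Ne.symm hne')
      simp only [if_neg hk]; simp only [Equiv.Perm.coe_inv, Equiv.apply_symm_apply]
      rw [if_neg (not_lt.2 (le_of_lt hlt))]

lemma sum_transfer {Q : ℕ} (σk : Equiv.Perm (Fin Q)) (φ : ℝ) (i j : Fin Q) :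
    ∑ σ ∈ Finset.univ.filter (fun σ : Equiv.Perm (Fin Q) => σ i < σ j), φ ^ kendall σ σk
      = ∑ ρ ∈ Finset.univ.filter (fun ρ : Equiv.Perm (Fin Q) => ρ (σk i) < ρ (σk j)),
          φ ^ NN ρ := by
  apply Finset.sum_bij' (i := fun σ _ => σ * σk⁻¹) (j := fun ρ _ => ρ * σk)
  · intro σ hσ
    rw [Finset.mem_filter] at hσ ⊢
    refine ⟨Finset.mem_univ _, ?_⟩
    simp only [Equiv.Perm.mul_apply, Equiv.Perm.coe_inv, Equiv.symm_apply_apply]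
    exact hσ.2
  · intro ρ hρ
    rw [Finset.mem_filter] at hρ ⊢
    refine ⟨Finset.mem_univ _, ?_⟩
    have h1 : (ρ * σk) i = ρ (σk i) := rfl
    have h2 : (ρ * σk) j = ρ (σk j) := rfl
    rw [h1, h2]
    exact hρ.2
  · intro σ _
    group
  · intro ρ _
    group
  · intro σ _
    rw [kendall_eq_NN]

theorem stmt4 (Q : ℕ) (σk : Equiv.Perm (Fin Q)) (φ : ℝ)
    (hφ0 : 0 ≤ φ) (hφ1 : φ < 1) (i j : Fin Q) (h : σk j < σk i)
    (L : ℕ) (hL : L = (σk i : ℕ) - (σk j : ℕ) + 1) :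
    mallowsBeta σk φ i j ≤ (L:ℝ) * φ ^ (L-1) / (1 + (L:ℝ) * φ ^ (L-1)) := by
  classical
  set c : ℝ := (L:ℝ) * φ ^ (L-1) with hc
  have hc0 : 0 ≤ c := mul_nonneg (Nat.cast_nonneg _) (pow_nonneg hφ0 _)
  set Z : ℝ := ∑ τ : Equiv.Perm (Fin Q), φ ^ kendall τ σk with hZdef
  set S1 : ℝ := ∑ σ ∈ Finset.univ.filter (fun σ : Equiv.Perm (Fin Q) => σ i < σ j),
    φ ^ kendall σ σk with hS1def
  set S2 : ℝ := ∑ σ ∈ Finset.univ.filter (fun σ : Equiv.Perm (Fin Q) => σ j < σ i),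
    φ ^ kendall σ σk with hS2def
  have hij : i ≠ j := by
    intro hc'
    rw [hc'] at h
    exact lt_irrefl _ h
  have kendall_self : kendall σk σk = 0 := by
    rw [kendall, Finset.card_eq_zero, Finset.filter_eq_empty_iff]
    rintro p -
    rintro ⟨-, hn⟩
    exact hn Iff.rfl
  -- Z = S1 + S2
  have hZ : Z = S1 + S2 := by
    rw [hZdef, ← Finset.sum_filter_add_sum_filter_not Finset.univ
      (fun σ : Equiv.Perm (Fin Q) => σ i < σ j) (fun σ => φ ^ kendall σ σk)]
    congr 1
    apply Finset.sum_congr _ (fun _ _ => rfl)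
    apply Finset.filter_congr
    intro σ _
    simp only [not_lt]
    constructor
    · intro hle
      exact lt_of_le_of_ne hle fun hc' => hij (σ.injective hc'.symm)
    · exact le_of_lt
  have hS2ge : (1:ℝ) ≤ S2 := by
    have hmem : σk ∈ Finset.univ.filter (fun σ : Equiv.Perm (Fin Q) => σ j < σ i) := by
      rw [Finset.mem_filter]
      exact ⟨Finset.mem_univ _, h⟩
    have h2 := Finset.single_le_sum (f := fun σ : Equiv.Perm (Fin Q) => φ ^ kendall σ σk)
      (fun σ _ => pow_nonneg hφ0 _) hmem
    simp only [kendall_self, pow_zero] at h2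
    exact h2
  have hS1nonneg : 0 ≤ S1 := Finset.sum_nonneg fun σ _ => pow_nonneg hφ0 _
  have hS2nonneg : (0:ℝ) ≤ S2 := le_trans zero_le_one hS2ge
  -- the key inequality, after transfer
  have key : S1 ≤ c * S2 := by
    rw [hS1def, hS2def, sum_transfer σk φ i j, sum_transfer σk φ j i, hc]
    exact key_ineq (σk j) (σk i) h hL φ hφ0
  -- β = S1 / Z
  have hbeta : mallowsBeta σk φ i j = S1 / Z := by
    rw [mallowsBeta]
    have : ∀ σ : Equiv.Perm (Fin Q),
        (if σ i < σ j then mallowsProb σk φ σ else 0)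
          = (if σ i < σ j then φ ^ kendall σ σk else 0) / Z := by
      intro σ
      by_cases hσ : σ i < σ j
      · rw [if_pos hσ, if_pos hσ, mallowsProb]
      · rw [if_neg hσ, if_neg hσ, zero_div]
    rw [Finset.sum_congr rfl fun σ _ => this σ, ← Finset.sum_div]
    congr 1
    rw [hS1def, Finset.sum_filter]
  have hZpos : 0 < Z := by
    rw [hZ]
    linarith
  rw [hbeta]
  rw [div_le_div_iff₀ hZpos (by linarith : (0:ℝ) < 1 + c)]
  rw [hZ]
  nlinarith [key, hS1nonneg, hc0]
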